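/- Let k be a field of characteristic p ≥ 0, K = k((t)) the field of formal Laurent series over k with t-adic valuation v. Let d ≥ 1 be an integer and let x ∈ K be a nonzero element such that 1/x = t^d + Σ_{m>d} b_m t^m ∈ k[[t]] (so b_d = 1). Assume there exists an integer m with b_m ≠ 0 and m not divisible by p (no condition when p = 0), and let r be the least such integer; note r ≥ d. Let D = (D_n)_{n≥0} be a Hasse–Schmidt derivation on K over k such that each D_n is continuous for the t-adic topology, D_1(x) = 1, and D_n(x) = 0 for all n ≥ 2. Then for every nonzero f ∈ K and every integer n ≥ 1, v(D_n(f)) ≥ (3n−1)d − (2n−1)r + v(f). -/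

import Mathlib

namespace HSaux

open HahnSeries Finset
open scoped Multiplicative

variable {k : Type*} [Field k]




/-- All coefficients below `q` vanish. -/
def Vge (g : LaurentSeries k) (q : ℤ) : Prop := ∀ i : ℤ, i < q → g.coeff i = 0

lemma Vge.mono {g : LaurentSeries k} {q q' : ℤ} (h : Vge g q) (hq : q' ≤ q) : Vge g q' :=
  fun i hi => h i (lt_of_lt_of_le hi hq)

lemma Vge_zero (q : ℤ) : Vge (0 : LaurentSeries k) q := fun i _ => rfl

lemma Vge_neg {g : LaurentSeries k} {q : ℤ} (h : Vge g q) : Vge (-g) q := by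
  intro i hi; rw [HahnSeries.coeff_neg, h i hi, neg_zero]

lemma Vge_add {g h : LaurentSeries k} {q : ℤ} (hg : Vge g q) (hh : Vge h q) :
    Vge (g + h) q := by
  intro i hi; rw [HahnSeries.coeff_add, hg i hi, hh i hi, add_zero]

lemma Vge_sub {g h : LaurentSeries k} {q : ℤ} (hg : Vge g q) (hh : Vge h q) :
    Vge (g - h) q := by
  intro i hi; rw [HahnSeries.coeff_sub, hg i hi, hh i hi, sub_zero]

lemma Vge_smul {g : LaurentSeries k} {q : ℤ} (a : k) (h : Vge g q) : Vge (a • g) q := by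
  intro i hi; rw [HahnSeries.coeff_smul, h i hi, smul_zero]

lemma Vge_sum {ι : Type*} {s : Finset ι} {g : ι → LaurentSeries k} {q : ℤ}
    (h : ∀ i ∈ s, Vge (g i) q) : Vge (∑ i ∈ s, g i) q := by
  classical
  induction s using Finset.induction_on with
  | empty => simpa using Vge_zero q
  | insert _ _ hx ih =>
    rw [Finset.sum_insert hx]
    exact Vge_add (h _ (Finset.mem_insert_self _ _))
      (ih fun i hi => h i (Finset.mem_insert_of_mem hi))

lemma Vge_mul {g h : LaurentSeries k} {a b : ℤ} (hg : Vge g a) (hh : Vge h b) :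
    Vge (g * h) (a + b) := by
  intro q hq
  rw [HahnSeries.coeff_mul]
  apply Finset.sum_eq_zero
  rintro ⟨i, j⟩ hij
  rw [Finset.mem_addAntidiagonal] at hij
  obtain ⟨hi, hj, hsum⟩ := hij
  by_cases hia : i < a
  · exact absurd (hg i hia) ((HahnSeries.mem_support _ _).mp hi)
  · have : j < b := by omega
    rw [hh j this, mul_zero]

/-- The monomial `t^m`. -/
noncomputable def T (m : ℤ) : LaurentSeries k := HahnSeries.single m 1

lemma T_mul (a b : ℤ) : (T a : LaurentSeries k) * T b = T (a + b) := by
  rw [T, T, T, HahnSeries.single_mul_single, one_mul]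

lemma T_zero : (T 0 : LaurentSeries k) = 1 := HahnSeries.single_zero_one

lemma Vge_T (m : ℤ) : Vge (T m : LaurentSeries k) m := by
  intro i hi
  rw [T, HahnSeries.coeff_single, if_neg (by omega)]

lemma Vge_one : Vge (1 : LaurentSeries k) 0 := by
  rw [← T_zero]; exact Vge_T 0

lemma single_eq_smul (i : ℤ) (c : k) : (HahnSeries.single i c : LaurentSeries k) = c • T i := by
  ext j
  rw [HahnSeries.coeff_smul, T, HahnSeries.coeff_single, HahnSeries.coeff_single]
  split <;> simp

lemma Vge_order (f : LaurentSeries k) : Vge f f.order :=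
  fun _ hi => HahnSeries.coeff_eq_zero_of_lt_order hi

lemma le_order_of_Vge {f : LaurentSeries k} {q : ℤ} (hf : f ≠ 0) (h : Vge f q) :
    q ≤ f.order := by
  by_contra hlt
  exact hf (HahnSeries.coeff_order_eq_zero.mp (h _ (by omega)))

lemma coeff_T_mul (s : ℤ) (g : LaurentSeries k) (q : ℤ) :
    ((T s : LaurentSeries k) * g).coeff q = g.coeff (q - s) := by
  have := HahnSeries.coeff_single_mul_add (r := (1 : k)) (x := g) (a := q - s) (b := s)
  rw [sub_add_cancel] at this
  rw [T, this, one_mul]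

lemma coeff_sum {ι : Type*} (s : Finset ι) (g : ι → LaurentSeries k) (q : ℤ) :
    (∑ i ∈ s, g i).coeff q = ∑ i ∈ s, (g i).coeff q :=
  map_sum (HahnSeries.coeff.addMonoidHom q) g s





/-- Truncation of a Laurent series at level `N`. -/
noncomputable def trunc (f : LaurentSeries k) (N : ℕ) : LaurentSeries k :=
  ∑ i ∈ Finset.Icc f.order (N : ℤ), HahnSeries.single i (f.coeff i)

lemma trunc_coeff (f : LaurentSeries k) (N : ℕ) (j : ℤ) :
    (trunc f N).coeff j = if j ∈ Finset.Icc f.order (N : ℤ) then f.coeff j else 0 := by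
  rw [trunc]
  rw [show (∑ i ∈ Finset.Icc f.order (N : ℤ), HahnSeries.single i (f.coeff i)).coeff j
      = ∑ i ∈ Finset.Icc f.order (N : ℤ), (HahnSeries.single i (f.coeff i)).coeff j from
    map_sum (HahnSeries.coeff.addMonoidHom j) _ _]
  simp only [HahnSeries.coeff_single]
  by_cases hj : j ∈ Finset.Icc f.order (N : ℤ)
  · refine Eq.trans (Finset.sum_eq_single_of_mem j hj
      fun b _ hne => if_neg fun h => hne h.symm) ?_
    simp [hj]
  · rw [if_neg hj]
    refine Finset.sum_eq_zero fun i hi => if_neg fun h => hj ?_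
    rwa [h]

lemma sub_trunc (f : LaurentSeries k) (N : ℕ) (i : ℤ) (hi : i < (N : ℤ) + 1) :
    (trunc f N - f).coeff i = 0 := by
  rw [HahnSeries.coeff_sub, trunc_coeff]
  split
  · exact sub_self _
  · rename_i hnot
    rw [Finset.mem_Icc, not_and_or] at hnot
    have : i < f.order := by omega
    rw [HahnSeries.coeff_eq_zero_of_lt_order this, sub_zero]

lemma exists_trunc_coeff_eq (Φ : LaurentSeries k →ₗ[k] LaurentSeries k)
    (hΦ : Continuous Φ) (f : LaurentSeries k) (q : ℤ) (M : ℕ) :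
    ∃ N : ℕ, M ≤ N ∧ (Φ (trunc f N)).coeff q = (Φ f).coeff q := by
  letI : UniformSpace k := ⊥
  have hc : Continuous fun g : LaurentSeries k => (Φ g).coeff q :=
    (LaurentSeries.uniformContinuous_coeff q).continuous.comp hΦ
  have hS : {g : LaurentSeries k | (Φ g).coeff q = (Φ f).coeff q} ∈ nhds f :=
    hc.continuousAt.preimage_mem_nhds ((isOpen_discrete {(Φ f).coeff q}).mem_nhds rfl)
  obtain ⟨γ, hγ⟩ := Valued.mem_nhds.mp hS
  set D := -(WithZero.log (MonoidWithZeroHom.ValueGroup₀.embedding γ.1) - 1) with hD₀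
  have hD : WithZero.exp (-D) < MonoidWithZeroHom.ValueGroup₀.embedding γ.1 := by
    rw [← WithZero.lt_log_iff_exp_lt (by simp), hD₀]
    simp
  refine ⟨max M D.toNat, le_max_left _ _, ?_⟩
  set N : ℕ := max M D.toNat with hN
  have h1 : Valued.v (trunc f N - f) ≤ WithZero.exp (-((N : ℤ) + 1)) := by
    rw [LaurentSeries.valuation_le_iff_coeff_lt_eq_zero]
    intro i hi
    exact sub_trunc f N i hi
  have h2 : WithZero.exp (-((N : ℤ) + 1)) ≤ WithZero.exp (-D) := by
    rw [WithZero.exp_le_exp]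
    have e1 : D ≤ (D.toNat : ℤ) := Int.self_le_toNat D
    have e2 : (D.toNat : ℤ) ≤ (N : ℤ) := by exact_mod_cast le_max_right M D.toNat
    omega
  have hmem : trunc f N ∈ {y : LaurentSeries k | Valued.v.restrict (y - f) < γ.1} := by
    rw [Set.mem_setOf_eq, Valued.v.restrict_lt_iff_lt_embedding]
    exact lt_of_le_of_lt (h1.trans h2) hD
  exact hγ hmem





section D

variable (D : ℕ → LaurentSeries k →ₗ[k] LaurentSeries k)
  (hD0 : D 0 = LinearMap.id)
  (hLeib : ∀ (n : ℕ) (f g : LaurentSeries k),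
      D n (f * g) = ∑ ℓ ∈ Finset.range (n + 1), D ℓ f * D (n - ℓ) g)

include hD0 in
lemma D_zero_apply (g : LaurentSeries k) : D 0 g = g := by rw [hD0]; rfl

include hD0 hLeib in
lemma D_one_eq_zero : ∀ j : ℕ, 1 ≤ j → D j (1 : LaurentSeries k) = 0 := by
  intro j
  induction j using Nat.strong_induction_on with
  | _ j IH =>
    intro hj
    have h := hLeib j 1 1
    rw [mul_one] at h
    obtain ⟨j', rfl⟩ := Nat.exists_eq_succ_of_ne_zero (by omega : j ≠ 0)
    simp only [Nat.succ_eq_add_one] at h IH ⊢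
    rw [Finset.sum_range_succ', Finset.sum_range_succ] at h
    have hmid : ∀ ℓ ∈ Finset.range j', D (ℓ + 1) (1 : LaurentSeries k) *
        D (j' + 1 - (ℓ + 1)) (1 : LaurentSeries k) = 0 := by
      intro ℓ hℓ
      rw [IH (ℓ + 1) (by rw [Finset.mem_range] at hℓ; omega) (by omega), zero_mul]
    rw [Finset.sum_eq_zero hmid] at h
    simp only [Nat.sub_self, Nat.sub_zero, D_zero_apply D hD0, zero_add, mul_one, one_mul] at h
    -- h : D (j'+1) 1 = D (j'+1) 1 + D (j'+1) 1
    have := h.symm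
    nth_rewrite 3 [← add_zero (D (j' + 1) (1 : LaurentSeries k))] at this
    exact add_left_cancel this
end D


section Mono

variable (D : ℕ → LaurentSeries k →ₗ[k] LaurentSeries k)
  (hD0 : D 0 = LinearMap.id)
  (hLeib : ∀ (n : ℕ) (f g : LaurentSeries k),
      D n (f * g) = ∑ ℓ ∈ Finset.range (n + 1), D ℓ f * D (n - ℓ) g)
  (β : ℕ → ℤ) (hβ0 : β 0 = 0)
  (hβsup : ∀ a b : ℕ, β (a + b) ≤ β a + β b)

include hD0 hLeib hβ0 hβsup in
lemma mono_aux (n : ℕ) (Hc : ∀ i, 1 ≤ i → i ≤ n → Vge (D i (T 1)) (β i + 1)) :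
    ∀ i ≤ n, ∀ m : ℤ, Vge (D i (T m)) (β i + m) := by
  have hone : ∀ i ≤ n, Vge (D i (1 : LaurentSeries k)) (β i) := by
    intro i _
    rcases Nat.eq_zero_or_pos i with rfl | hipos
    · rw [D_zero_apply D hD0, hβ0]; exact Vge_one
    · rw [D_one_eq_zero D hD0 hLeib i hipos]; exact Vge_zero _
  have hpos : ∀ M : ℕ, ∀ i ≤ n, Vge (D i (T (M : ℤ))) (β i + M) := by
    intro M
    induction M with
    | zero =>
      intro i hi
      have := (hone i hi).mono (le_refl (β i))
      rw [← T_zero] at this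
      exact fun q hq => this q (by push_cast at hq ⊢; omega)
    | succ M ih =>
      intro i hi
      have hTs : (T ((M + 1 : ℕ) : ℤ) : LaurentSeries k) = T (M : ℤ) * T 1 := by
        rw [T_mul]; norm_num
      rw [hTs, hLeib i]
      apply Vge_sum
      intro ℓ hℓ
      rw [Finset.mem_range] at hℓ
      rcases eq_or_lt_of_le (Nat.lt_succ_iff.mp hℓ) with rfl | hlt
      · rw [Nat.sub_self, D_zero_apply D hD0]
        exact (Vge_mul (ih ℓ hi) (Vge_T 1)).mono (by push_cast; omega)
      · have h1 : 1 ≤ i - ℓ := by omega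
        have h2 : i - ℓ ≤ n := by omega
        refine (Vge_mul (ih ℓ (by omega)) (Hc (i - ℓ) h1 h2)).mono ?_
        have hsum := hβsup ℓ (i - ℓ)
        rw [Nat.add_sub_cancel' (le_of_lt hlt)] at hsum
        push_cast
        omega
  have hneg : ∀ M : ℕ, ∀ i ≤ n, Vge (D i (T (-(M : ℤ)))) (β i - M) := by
    intro M i
    induction i using Nat.strong_induction_on with
    | _ i IH =>
      intro hi
      rcases Nat.eq_zero_or_pos i with rfl | hipos
      · rw [D_zero_apply D hD0]
        exact (Vge_T (-(M : ℤ))).mono (by rw [hβ0]; omega)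
      · have hTT : (T (M : ℤ) : LaurentSeries k) * T (-(M : ℤ)) = 1 := by
          rw [T_mul, add_neg_cancel, T_zero]
        have h0 : (0 : LaurentSeries k) =
            ∑ ℓ ∈ Finset.range (i + 1), D ℓ (T (M : ℤ)) * D (i - ℓ) (T (-(M : ℤ))) := by
          rw [← hLeib, hTT, D_one_eq_zero D hD0 hLeib i hipos]
        rw [Finset.sum_range_succ'] at h0
        rw [D_zero_apply D hD0, Nat.sub_zero] at h0
        have hiso : (T (M : ℤ) : LaurentSeries k) * D i (T (-(M : ℤ))) =
            -∑ ℓ ∈ Finset.range i, D (ℓ + 1) (T (M : ℤ)) * D (i - (ℓ + 1)) (T (-(M : ℤ))) := by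
          rw [eq_comm, neg_eq_iff_add_eq_zero]
          exact h0.symm
        have hv : Vge ((T (M : ℤ) : LaurentSeries k) * D i (T (-(M : ℤ)))) (β i) := by
          rw [hiso]
          apply Vge_neg
          apply Vge_sum
          intro ℓ hℓ
          rw [Finset.mem_range] at hℓ
          have hβ := hβsup (ℓ + 1) (i - (ℓ + 1))
          rw [Nat.add_sub_cancel' (by omega : ℓ + 1 ≤ i)] at hβ
          refine (Vge_mul (hpos M (ℓ + 1) (by omega)) (IH (i - (ℓ + 1)) (by omega) (by omega))).mono ?_
          omega
        have hfin := Vge_mul (Vge_T (-(M : ℤ))) hv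
        rw [← mul_assoc, (by rw [T_mul, neg_add_cancel, T_zero] :
            (T (-(M : ℤ)) : LaurentSeries k) * T (M : ℤ) = 1), one_mul] at hfin
        exact hfin.mono (by omega)
  intro i hi m
  obtain ⟨M, rfl | rfl⟩ := Int.eq_nat_or_neg m
  · exact hpos M i hi
  · exact (hneg M i hi).mono (by omega)

include hD0 hLeib hβ0 hβsup in
lemma lemA (r d : ℤ) (hrd : d ≤ r)
    (hβsup' : ∀ a b : ℕ, 1 ≤ a → 1 ≤ b → β (a + b) + (r - d) ≤ β a + β b)
    (n : ℕ) (hn1 : 1 ≤ n)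
    (Hc : ∀ i, 1 ≤ i → i < n → Vge (D i (T 1)) (β i + 1)) :
    ∀ m : ℤ, 1 ≤ m →
      Vge (D n (T m) - ((m : k)) • ((T (m - 1) : LaurentSeries k) * D n (T 1)))
        (m + β n + (r - d)) := by
  have hmono := mono_aux D hD0 hLeib β hβ0 hβsup (n - 1)
      (fun i h1 h2 => Hc i h1 (by omega))
  have smul_mul : ∀ (a : k) (g h : LaurentSeries k), (a • g) * h = a • (g * h) := by
    intro a g h
    rw [← HahnSeries.single_zero_mul_eq_smul, ← HahnSeries.single_zero_mul_eq_smul, mul_assoc]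
  intro m hm
  revert hm
  refine Int.le_induction
    (motive := fun m _ => Vge (D n (T m) - ((m : k)) • ((T (m - 1) : LaurentSeries k) * D n (T 1)))
      (m + β n + (r - d))) ?_ ?_ m
  ·
    have hz : D n (T (1 : ℤ)) - (((1 : ℤ) : k)) •
        ((T ((1 : ℤ) - 1) : LaurentSeries k) * D n (T 1)) = 0 := by
      rw [show (1 : ℤ) - 1 = 0 from by ring, T_zero, one_mul, Int.cast_one, one_smul, sub_self]
    rw [hz]
    exact Vge_zero _
  · intro m hm1 ihm
    obtain ⟨n', rfl⟩ := Nat.exists_eq_succ_of_ne_zero (by omega : n ≠ 0)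
    simp only [Nat.succ_eq_add_one] at *
    have expand := hLeib (n' + 1) (T m) (T 1)
    rw [Finset.sum_range_succ, Finset.sum_range_succ'] at expand
    rw [Nat.sub_self, Nat.sub_zero, D_zero_apply D hD0, D_zero_apply D hD0] at expand
    rw [T_mul] at expand
    have h1 : (T (m - 1) : LaurentSeries k) * D (n' + 1) (T 1) * T 1
        = T m * D (n' + 1) (T 1) := by
      rw [mul_right_comm, T_mul, show m - 1 + 1 = m from by ring]
    have key : D (n' + 1) (T (m + 1)) - (((m + 1 : ℤ) : k)) •
          ((T (m + 1 - 1) : LaurentSeries k) * D (n' + 1) (T 1))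
        = (∑ ℓ ∈ Finset.range n', D (ℓ + 1) (T m) * D (n' + 1 - (ℓ + 1)) (T 1))
          + (D (n' + 1) (T m) - ((m : k)) •
              ((T (m - 1) : LaurentSeries k) * D (n' + 1) (T 1))) * T 1 := by
      rw [expand, sub_mul, smul_mul, h1, show m + 1 - 1 = m from by ring]
      push_cast
      rw [add_smul, one_smul]
      abel
    rw [key]
    have hmid : Vge (∑ ℓ ∈ Finset.range n', D (ℓ + 1) (T m) * D (n' + 1 - (ℓ + 1)) (T 1))
        ((m + 1) + β (n' + 1) + (r - d)) := by
      apply Vge_sum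
      intro ℓ hℓ
      rw [Finset.mem_range] at hℓ
      have e1 : n' + 1 - (ℓ + 1) = n' - ℓ := by omega
      rw [e1]
      have hb1 : Vge (D (ℓ + 1) (T m)) (β (ℓ + 1) + m) :=
        hmono (ℓ + 1) (by omega) m
      have hb2 : Vge (D (n' - ℓ) (T 1)) (β (n' - ℓ) + 1) :=
        Hc (n' - ℓ) (by omega) (by omega)
      refine (Vge_mul hb1 hb2).mono ?_
      have hs := hβsup' (ℓ + 1) (n' - ℓ) (by omega) (by omega)
      rw [show ℓ + 1 + (n' - ℓ) = n' + 1 from by omega] at hs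
      omega
    refine Vge_add hmid ((Vge_mul ihm (Vge_T 1)).mono (by omega))

end Mono
end HSaux

open scoped Classical in
/-- The additive (t-adic) valuation on `k((t))`, with `v 0 = ⊤`. -/
noncomputable def addVal {k : Type*} [Field k] (f : LaurentSeries k) : WithTop ℤ :=
  if f = 0 then ⊤ else (f.order : WithTop ℤ)

open HSaux in
/-- Let `k` be a field of characteristic `p ≥ 0` and `K = k((t))` with t-adic valuation `v`.
Let `x ∈ K` be nonzero with `1/x = t^d + Σ_{m>d} b_m t^m` (`d ≥ 1`), let `r` be the least
integer `m` with `b_m ≠ 0` and `p ∤ m`, and let `D` be a Hasse–Schmidt derivation on `K`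
over `k`, continuous for the t-adic topology, with `D 1 x = 1` and `D n x = 0` for `n ≥ 2`.
Then for every nonzero `f ∈ K` and every `n ≥ 1`,
`v (D n f) ≥ (3n-1)d - (2n-1)r + v f`. -/
theorem hasse_schmidt_val_lower_bound_infinite (k : Type*) [Field k]
    (d : ℤ) (hd : 1 ≤ d) (x : LaurentSeries k) (hx0 : x ≠ 0)
    (hxd : (x⁻¹).coeff d = 1)
    (hxlow : ∀ m : ℤ, m < d → (x⁻¹).coeff m = 0)
    (r : ℤ)
    (hr : (x⁻¹).coeff r ≠ 0 ∧ ¬ ((ringChar k : ℤ) ∣ r))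
    (hrmin : ∀ m : ℤ, (x⁻¹).coeff m ≠ 0 → ¬ ((ringChar k : ℤ) ∣ m) → r ≤ m)
    (D : ℕ → LaurentSeries k →ₗ[k] LaurentSeries k)
    (hD0 : D 0 = LinearMap.id)
    (hLeib : ∀ (n : ℕ) (f g : LaurentSeries k),
      D n (f * g) = ∑ ℓ ∈ Finset.range (n + 1), D ℓ f * D (n - ℓ) g)
    (hcont : ∀ n : ℕ, Continuous (D n))
    (hx1 : D 1 x = 1) (hx2 : ∀ n : ℕ, 2 ≤ n → D n x = 0)
    (f : LaurentSeries k) (hf : f ≠ 0) (n : ℕ) (hn : 1 ≤ n) :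
    ((((3 * (n : ℤ) - 1) * d - (2 * (n : ℤ) - 1) * r + f.order : ℤ)) : WithTop ℤ)
      ≤ addVal (D n f) := by
  classical
  set y := x⁻¹ with hy
  have hy0 : y ≠ 0 := inv_ne_zero hx0
  have hyd : Vge y d := fun i hi => hxlow i hi
  have hrd : d ≤ r := by
    by_contra hlt
    exact hr.1 (hxlow r (by omega))
  have hydne : y.coeff d ≠ 0 := by rw [hy, hxd]; exact one_ne_zero
  have horder : y.order = d :=
    le_antisymm (HahnSeries.order_le_of_coeff_ne_zero hydne) (le_order_of_Vge hy0 hyd)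
  have hD0' : ∀ g : LaurentSeries k, D 0 g = g := D_zero_apply D hD0
  -- the valuation gain function
  set β : ℕ → ℤ :=
    fun i => if i = 0 then 0 else (3 * (i : ℤ) - 1) * d - (2 * (i : ℤ) - 1) * r with hβ
  have hβ0 : β 0 = 0 := rfl
  have hβpos : ∀ i : ℕ, 1 ≤ i →
      β i = (3 * (i : ℤ) - 1) * d - (2 * (i : ℤ) - 1) * r := by
    intro i hi
    simp only [hβ, if_neg (by omega : ¬ i = 0)]
  have hβsup' : ∀ a b : ℕ, 1 ≤ a → 1 ≤ b → β (a + b) + (r - d) ≤ β a + β b := by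
    intro a b ha hb
    have h1 : β a + β b = β (a + b) + (r - d) := by
      rw [hβpos a ha, hβpos b hb, hβpos (a + b) (by omega)]
      push_cast
      ring
    omega
  have hβsup : ∀ a b : ℕ, β (a + b) ≤ β a + β b := by
    intro a b
    rcases Nat.eq_zero_or_pos a with rfl | ha
    · simp [hβ0]
    rcases Nat.eq_zero_or_pos b with rfl | hb
    · simp [hβ0]
    have := hβsup' a b ha hb
    omega
  -- characteristic facts
  have hp : ∀ i : ℤ, i < r → ((i : ℤ) : k) * y.coeff i = 0 := by
    intro i hi
    by_cases hbi : y.coeff i = 0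
    · rw [hbi, mul_zero]
    · have hdvd : (ringChar k : ℤ) ∣ i := by
        by_contra hnd
        exact absurd (hrmin i hbi hnd) (by omega)
      obtain ⟨s, rfl⟩ := hdvd
      have hc0 : ((ringChar k : ℤ) : k) = 0 := by
        push_cast
        exact ringChar.Nat.cast_ringChar
      rw [Int.cast_mul, hc0, zero_mul, zero_mul]
  have hrk : ((r : ℤ) : k) ≠ 0 := by
    intro h0
    exact hr.2 ((CharP.intCast_eq_zero_iff k (ringChar k) r).mp h0)
  -- relations satisfied by y
  have hxy : x * y = 1 := mul_inv_cancel₀ hx0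
  have hDy1 : D 1 y = -(y * y) := by
    have h := hLeib 1 x y
    rw [hxy, D_one_eq_zero D hD0 hLeib 1 le_rfl] at h
    rw [Finset.sum_range_succ, Finset.sum_range_succ, Finset.sum_range_zero] at h
    simp only [Nat.sub_self, Nat.sub_zero, hD0', hx1, zero_add, one_mul] at h
    have h2 : x * D 1 y = -y := eq_neg_of_add_eq_zero_left h.symm
    have h3 := congrArg (fun z => y * z) h2
    rw [← mul_assoc, mul_comm y x, hxy, one_mul] at h3
    rw [h3]
    ring
  have hDyrec : ∀ j : ℕ, D (j + 2) y = -(y * D (j + 1) y) := by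
    intro j
    have h := hLeib (j + 2) x y
    rw [hxy, D_one_eq_zero D hD0 hLeib _ (by omega)] at h
    rw [show j + 2 + 1 = (j + 1) + 1 + 1 from rfl] at h
    rw [Finset.sum_range_succ'] at h
    rw [Finset.sum_range_succ'] at h
    have hmid : ∀ ℓ ∈ Finset.range (j + 1),
        D (ℓ + 1 + 1) x * D (j + 2 - (ℓ + 1 + 1)) y = 0 := by
      intro ℓ _
      rw [hx2 (ℓ + 1 + 1) (by omega), zero_mul]
    rw [Finset.sum_eq_zero hmid, zero_add] at h
    simp only [zero_add, Nat.sub_zero, hD0', hx1, one_mul] at h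
    rw [show j + 2 - 1 = j + 1 from by omega] at h
    have h2 : x * D (j + 2) y = -(D (j + 1) y) := eq_neg_of_add_eq_zero_right h.symm
    have h3 := congrArg (fun z => y * z) h2
    rw [← mul_assoc, mul_comm y x, hxy, one_mul] at h3
    rw [h3]
    ring
  have hDy : ∀ j : ℕ, 1 ≤ j → Vge (D j y) (((j : ℤ) + 1) * d) := by
    have haux : ∀ j : ℕ, Vge (D (j + 1) y) (((j : ℤ) + 2) * d) := by
      intro j
      induction j with
      | zero =>
        rw [show (0 : ℕ) + 1 = 1 from rfl, hDy1]
        exact (Vge_neg (Vge_mul hyd hyd)).mono (le_of_eq (by push_cast; ring))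
      | succ j IH =>
        rw [show j + 1 + 1 = j + 2 from rfl, hDyrec j]
        exact (Vge_neg (Vge_mul hyd IH)).mono (le_of_eq (by push_cast; ring))
    intro j hj
    obtain ⟨j', rfl⟩ : ∃ t, j = t + 1 := ⟨j - 1, by omega⟩
    exact (haux j').mono (le_of_eq (by push_cast; ring))
  -- expanding D applied to truncations
  have htrunc : ∀ (g : LaurentSeries k) (N : ℕ) (nn : ℕ),
      D nn (trunc g N) = ∑ i ∈ Finset.Icc g.order (N : ℤ), g.coeff i • D nn (T i) := by
    intro g N nn
    rw [trunc, map_sum]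
    exact Finset.sum_congr rfl fun i _ => by rw [single_eq_smul, map_smul]
  -- the core estimate
  have core : ∀ n : ℕ, 1 ≤ n → Vge (D n (T 1)) (β n + 1) := by
    intro n
    induction n using Nat.strong_induction_on with
    | _ n IH =>
      intro hn1
      by_contra hcon
      rw [Vge] at hcon
      push_neg at hcon
      obtain ⟨j, hjlt, hjne⟩ := hcon
      have hcne : D n (T 1) ≠ 0 := fun h => hjne (by rw [h]; simp)
      set j₀ := (D n (T 1)).order with hj0
      have hj0le : j₀ ≤ j := HahnSeries.order_le_of_coeff_ne_zero hjne
      set q : ℤ := r - 1 + j₀ with hq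
      have hqlt : q < β n + r := by omega
      have hβr : β n + r ≤ ((n : ℤ) + 1) * d := by
        rw [hβpos n hn1]
        have h2 : (2 * (n : ℤ) - 2) * d ≤ (2 * (n : ℤ) - 2) * r :=
          mul_le_mul_of_nonneg_left hrd (by push_cast; omega)
        nlinarith [h2]
      obtain ⟨N, hNr, hNeq⟩ := exists_trunc_coeff_eq (D n) (hcont n) y q r.toNat
      have hNrZ : r ≤ (N : ℤ) := by
        have h1 : (r.toNat : ℤ) ≤ (N : ℤ) := by exact_mod_cast hNr
        have h2 : (r.toNat : ℤ) = r := Int.toNat_of_nonneg (by omega)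
        omega
      have hDNy0 : (D n y).coeff q = 0 := hDy n hn1 q (by linarith)
      have hcoeff : ∀ i ∈ Finset.Icc y.order (N : ℤ),
          (D n (T i)).coeff q = ((i : ℤ) : k) * (D n (T 1)).coeff (q - i + 1) := by
        intro i hi
        rw [Finset.mem_Icc, horder] at hi
        have hi1 : (1 : ℤ) ≤ i := by omega
        have hA := lemA D hD0 hLeib β hβ0 hβsup r d hrd hβsup' n hn1
          (fun i' a b => IH i' b a) i hi1
        have hq2 : q < i + β n + (r - d) := by omega
        have hz := hA q hq2
        rw [HahnSeries.coeff_sub] at hz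
        have heq : (D n (T i)).coeff q
            = (((i : ℤ) : k) • ((T (i - 1) : LaurentSeries k) * D n (T 1))).coeff q :=
          sub_eq_zero.mp hz
        rw [heq, HahnSeries.coeff_smul, coeff_T_mul, smul_eq_mul,
          show q - (i - 1) = q - i + 1 from by ring]
      have hsum : (D n (trunc y N)).coeff q = ∑ i ∈ Finset.Icc y.order (N : ℤ),
          y.coeff i * (((i : ℤ) : k) * (D n (T 1)).coeff (q - i + 1)) := by
        rw [htrunc, coeff_sum]
        refine Finset.sum_congr rfl fun i hi => ?_
        rw [HahnSeries.coeff_smul, smul_eq_mul, hcoeff i hi]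
      have hterm : ∀ i ∈ Finset.Icc y.order (N : ℤ), i ≠ r →
          y.coeff i * (((i : ℤ) : k) * (D n (T 1)).coeff (q - i + 1)) = 0 := by
        intro i hi hir
        rcases lt_or_gt_of_ne hir with hlt | hgt
        · rw [← mul_assoc, mul_comm (y.coeff i) (((i : ℤ) : k)), hp i hlt, zero_mul]
        · have hcz : (D n (T 1)).coeff (q - i + 1) = 0 := by
            apply HahnSeries.coeff_eq_zero_of_lt_order
            rw [← hj0]
            omega
          rw [hcz, mul_zero, mul_zero]
      have hrmem : r ∈ Finset.Icc y.order (N : ℤ) := by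
        rw [Finset.mem_Icc, horder]
        omega
      have hsingle : (D n (trunc y N)).coeff q
          = y.coeff r * (((r : ℤ) : k) * (D n (T 1)).coeff j₀) := by
        rw [hsum, Finset.sum_eq_single_of_mem r hrmem hterm,
          show q - r + 1 = j₀ from by omega]
      rw [hNeq, hDNy0] at hsingle
      have hne : y.coeff r * (((r : ℤ) : k) * (D n (T 1)).coeff j₀) ≠ 0 :=
        mul_ne_zero hr.1 (mul_ne_zero hrk (fun h => hcne (HahnSeries.coeff_order_eq_zero.mp h)))
      exact hne hsingle.symm
  -- monomial bounds at level n
  have hmono := mono_aux D hD0 hLeib β hβ0 hβsup n (fun i h1 _ => core i h1) n le_rfl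
  -- bound for D n f
  have hVf : Vge (D n f) (β n + f.order) := by
    intro q hq
    obtain ⟨N, _, hNeq⟩ := exists_trunc_coeff_eq (D n) (hcont n) f q 0
    rw [← hNeq, htrunc, coeff_sum]
    refine Finset.sum_eq_zero fun i hi => ?_
    rw [Finset.mem_Icc] at hi
    rw [HahnSeries.coeff_smul, hmono i q (by omega), smul_zero]
  -- conclusion
  by_cases hDf : D n f = 0
  · rw [addVal, if_pos hDf]
    exact le_top
  · rw [addVal, if_neg hDf]
    have hle : (3 * (n : ℤ) - 1) * d - (2 * (n : ℤ) - 1) * r + f.order ≤ (D n f).order := by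
      have h1 := le_order_of_Vge hDf hVf
      have h2 := hβpos n hn
      omega
    exact_mod_cast hle
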